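/- Let s be a positive integer and p₃ := (s+1)(s−1)²+1. Let G be the finite simple graph whose vertex set is the disjoint union of two vertices u, v and s pairwise disjoint sets C₁,…,C_s each of size p₃, in which two distinct vertices are adjacent if and only if they lie in the same set Cᵢ, or one of them is u and the other is v, or one of them is u and the other lies in some Cᵢ. Then the smallest eigenvalue of the adjacency matrix of G is strictly less than −s. -/

import Mathlib

/-- Auxiliary projection: `none` for the two special vertices `u, v`,
`some i` for vertices of clique `Cᵢ`. -/
def pendantProj {s p : ℕ} : Fin 2 ⊕ (Fin s × Fin p) → Option (Fin s)
  | Sum.inl _ => none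
  | Sum.inr x => some x.1

/-- The graph consisting of `s` pairwise disjoint cliques `C₁, …, C_s` of order `p`
(with no edges between distinct cliques), a vertex `u = Sum.inl 0` adjacent to all clique
vertices, and a vertex `v = Sum.inl 1` adjacent only to `u`. -/
def coneWithPendant (s p : ℕ) : SimpleGraph (Fin 2 ⊕ (Fin s × Fin p)) where
  Adj a b := a ≠ b ∧ (a = Sum.inl 0 ∨ b = Sum.inl 0 ∨
      (pendantProj a = pendantProj b ∧ pendantProj a ≠ none))
  symm := by
    constructor
    intro a b h
    refine ⟨Ne.symm h.1, ?_⟩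
    rcases h.2 with h | h | ⟨h1, h2⟩
    · exact Or.inr (Or.inl h)
    · exact Or.inl h
    · exact Or.inr (Or.inr ⟨h1.symm, h1 ▸ h2⟩)
  loopless := by
    constructor
    intro a h
    exact h.1 rfl

instance (s p : ℕ) : DecidableRel (coneWithPendant s p).Adj := fun a b =>
  inferInstanceAs (Decidable (_ ∧ _))

open Matrix Pointwise

def xvec (a b c : ℝ) : Fin 2 ⊕ (Fin s × Fin p) → ℝ := Sum.elim ![a, b] fun _ => c

lemma adj_ll01 {s p : ℕ} : (coneWithPendant s p).Adj (Sum.inl 0) (Sum.inl 1) := by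
  simp [coneWithPendant]

lemma adj_rr {s p : ℕ} (y z : Fin s × Fin p) :
    (coneWithPendant s p).Adj (Sum.inr y) (Sum.inr z) ↔ y ≠ z ∧ y.1 = z.1 := by
  constructor
  · rintro ⟨h1, h2 | h2 | ⟨h2, -⟩⟩
    · simp at h2
    · simp at h2
    · exact ⟨fun h => h1 (by rw [h]), by simpa [pendantProj] using h2⟩
  · rintro ⟨h1, h2⟩
    exact ⟨by simpa using h1, Or.inr (Or.inr ⟨by simpa [pendantProj] using h2, by simp [pendantProj]⟩)⟩

lemma mulvec_eval {s p : ℕ} (a b c : ℝ) :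
    ((coneWithPendant s p).adjMatrix ℝ) *ᵥ (xvec a b c) =
      Sum.elim ![b + s * p * c, a] (fun _ => a + ((p - 1 : ℕ) : ℝ) * c) := by
  funext w
  rcases w with i | y
  · fin_cases i
    · simp only [Matrix.mulVec, dotProduct, SimpleGraph.adjMatrix_apply]
      simp [Matrix.mulVec, dotProduct, xvec, Fintype.sum_sum_type,
        Fin.sum_univ_two, coneWithPendant, pendantProj, Fintype.sum_prod_type,
        Finset.sum_ite_eq, mul_comm]
    · simp only [Matrix.mulVec, dotProduct, SimpleGraph.adjMatrix_apply]
      simp [Matrix.mulVec, dotProduct, xvec, Fintype.sum_sum_type,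
        Fin.sum_univ_two, coneWithPendant, pendantProj, Fintype.sum_prod_type,
        Finset.sum_ite_eq, mul_comm]
  · simp only [Matrix.mulVec, dotProduct, SimpleGraph.adjMatrix_apply]
    simp [Matrix.mulVec, dotProduct, xvec, Fintype.sum_sum_type,
      Fin.sum_univ_two, coneWithPendant, pendantProj, Fintype.sum_prod_type,
      Finset.sum_ite_eq, mul_comm]
    obtain ⟨y1, y2⟩ := y
    have hp : 0 < p := Fin.pos y2
    have key : ∀ i : Fin s, (∑ j : Fin p, if ¬(y1, y2) = (i, j) ∧ y1 = i then c else 0)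
        = if y1 = i then ((p : ℝ) - 1) * c else 0 := by
      intro i
      by_cases hi : y1 = i
      · subst hi
        rw [if_pos rfl]
        rw [Finset.sum_congr rfl (fun j _ => show
            (if ¬(y1, y2) = (y1, j) ∧ y1 = y1 then c else 0) = c - (if y2 = j then c else 0) by
          by_cases hj : y2 = j <;> simp [hj, Prod.ext_iff])]
        rw [Finset.sum_sub_distrib, Finset.sum_const, Finset.sum_ite_eq]
        simp
        ring
      · rw [if_neg hi]
        apply Finset.sum_eq_zero
        intro j _
        rw [if_neg]
        rintro ⟨-, h⟩
        exact hi h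
    rw [Finset.sum_congr rfl (fun i _ => key i), Finset.sum_ite_eq]
    have : ((p - 1 : ℕ) : ℝ) = (p : ℝ) - 1 := by
      rw [Nat.cast_sub hp]; simp
    simp [this]
    ring

lemma dot_self {s p : ℕ} (a b c : ℝ) :
    (xvec a b c : Fin 2 ⊕ (Fin s × Fin p) → ℝ) ⬝ᵥ xvec a b c
      = a ^ 2 + b ^ 2 + s * p * c ^ 2 := by
  simp [dotProduct, xvec, Fintype.sum_sum_type, Fin.sum_univ_two,
    Finset.sum_const, Finset.card_univ]
  ring

lemma dot_mulVec {s p : ℕ} (a b c : ℝ) (hp : 0 < p) :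
    (xvec a b c : Fin 2 ⊕ (Fin s × Fin p) → ℝ) ⬝ᵥ
        (((coneWithPendant s p).adjMatrix ℝ) *ᵥ xvec a b c)
      = 2 * a * b + 2 * s * p * a * c + s * p * ((p : ℝ) - 1) * c ^ 2 := by
  rw [mulvec_eval a b c]
  have hc : ((p - 1 : ℕ) : ℝ) = (p : ℝ) - 1 := by
    rw [Nat.cast_sub hp]; simp
  simp [dotProduct, xvec, Fintype.sum_sum_type, Fin.sum_univ_two,
    Finset.sum_const, Finset.card_univ, hc]
  ring


lemma exists_small_eigenvalue {s p : ℕ} (hp : 0 < p) (a b c : ℝ)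
    (h : 2 * a * b + 2 * s * p * a * c + s * p * ((p : ℝ) - 1) * c ^ 2
        + s * (a ^ 2 + b ^ 2 + s * p * c ^ 2) < 0) :
    ∃ μ ∈ spectrum ℝ ((coneWithPendant s p).adjMatrix ℝ), μ < -(s : ℝ) := by
  classical
  set A := (coneWithPendant s p).adjMatrix ℝ with hAdef
  have hA : A.IsHermitian := by
    show Aᴴ = A
    ext i j
    simp [hAdef, Matrix.conjTranspose_apply, SimpleGraph.adjMatrix_apply,
      SimpleGraph.adj_comm]
  set B := algebraMap ℝ (Matrix (Fin 2 ⊕ (Fin s × Fin p)) (Fin 2 ⊕ (Fin s × Fin p)) ℝ) s + A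
    with hBdef
  have halg : algebraMap ℝ (Matrix (Fin 2 ⊕ (Fin s × Fin p)) (Fin 2 ⊕ (Fin s × Fin p)) ℝ) s
      = (s : ℝ) • (1 : Matrix (Fin 2 ⊕ (Fin s × Fin p)) (Fin 2 ⊕ (Fin s × Fin p)) ℝ) :=
    Algebra.algebraMap_eq_smul_one _
  have hsm : ((s : ℝ) • (1 : Matrix (Fin 2 ⊕ (Fin s × Fin p)) (Fin 2 ⊕ (Fin s × Fin p)) ℝ)).IsHermitian := by
    show _ᴴ = _
    rw [Matrix.conjTranspose_smul, Matrix.isHermitian_one.eq]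
    simp
  have hB : B.IsHermitian := by
    rw [hBdef, halg]
    exact hsm.add hA
  by_contra hcon
  push_neg at hcon
  have hBpsd : B.PosSemidef := by
    refine hB.posSemidef_iff_eigenvalues_nonneg.mpr fun i => show (0 : ℝ) ≤ hB.eigenvalues i from ?_
    have hmem : hB.eigenvalues i ∈ ({(s : ℝ)} : Set ℝ) + spectrum ℝ A := by
      rw [spectrum.singleton_add_eq]
      exact hB.eigenvalues_mem_spectrum_real i
    obtain ⟨r, hr, μ, hμ, hsum⟩ := Set.mem_add.mp hmem
    rw [Set.mem_singleton_iff] at hr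
    subst hr
    have := hcon μ hμ
    linarith [this]
  have hq := hBpsd.dotProduct_mulVec_nonneg (xvec a b c)
  rw [show star (xvec a b c : Fin 2 ⊕ (Fin s × Fin p) → ℝ) = xvec a b c from
    funext fun w => star_trivial _] at hq
  rw [hBdef, Matrix.add_mulVec, halg, Matrix.smul_mulVec, Matrix.one_mulVec,
    dotProduct_add, dotProduct_smul] at hq
  rw [dot_mulVec a b c hp, dot_self a b c] at hq
  simp only [smul_eq_mul] at hq
  linarith

theorem statement6 (s : ℕ) (hs : 0 < s) :
    ∃ μ ∈ spectrum ℝ ((coneWithPendant s ((s + 1) * (s - 1) ^ 2 + 1)).adjMatrix ℝ),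
      μ < -(s : ℝ) := by
  set p := (s + 1) * (s - 1) ^ 2 + 1 with hpdef
  have hp : 0 < p := Nat.succ_pos _
  rcases eq_or_lt_of_le (Nat.succ_le_of_lt hs) with hs1 | hs2
  · -- s = 1
    have : s = 1 := hs1.symm
    subst this
    apply exists_small_eigenvalue hp (-3) 2 2
    have : p = 1 := by norm_num [hpdef]
    rw [this]
    norm_num
  · -- s ≥ 2
    have hs2' : (2 : ℝ) ≤ (s : ℝ) := by exact_mod_cast hs2
    have hPcast : (p : ℝ) = ((s : ℝ) + 1) * ((s : ℝ) - 1) ^ 2 + 1 := by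
      have h1 : ((s - 1 : ℕ) : ℝ) = (s : ℝ) - 1 := by
        rw [Nat.cast_sub (Nat.succ_le_of_lt hs)]; simp
      rw [hpdef]
      push_cast [h1]
      ring
    apply exists_small_eigenvalue hp (-(s : ℝ) ^ 2 * p) ((s : ℝ) * p) ((s : ℝ) ^ 2 - 1)
    have hkey : 2 * (-(s : ℝ) ^ 2 * p) * ((s : ℝ) * p)
        + 2 * s * p * (-(s : ℝ) ^ 2 * p) * ((s : ℝ) ^ 2 - 1)
        + s * p * ((p : ℝ) - 1) * ((s : ℝ) ^ 2 - 1) ^ 2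
        + s * ((-(s : ℝ) ^ 2 * p) ^ 2 + ((s : ℝ) * p) ^ 2 + s * p * ((s : ℝ) ^ 2 - 1) ^ 2)
        = -((s : ℝ) * p * ((s : ℝ) ^ 2 - 1)) := by
      rw [hPcast]
      ring
    rw [hkey]
    have hP1 : (1 : ℝ) ≤ (p : ℝ) := by exact_mod_cast hp
    nlinarith
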